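/- (Effective stability for a nearly integrable normal form.) Let $T\geq 1$ and $C_0\geq 0$. Let $D\subseteq\mathbb{R}^d$ be open, $I_0\in D$ with the closed ball $\bar B(I_0,T^{-2/3})\subseteq D$, let $N,G:D\to\mathbb{R}$ be of class $C^2$ with $|\nabla^2 N(I)|\leq C_0$ and $|\nabla^2 G(I)|\leq C_0$ for all $I\in\bar B(I_0,T^{-2/3})$, and let $R:\mathbb{R}^d\times D\to\mathbb{R}$ be of class $C^1$ with $|\partial_I R(\theta,I)|\leq T^{-1}$ and $|\partial_\theta R(\theta,I)|\leq T^{-1}$ for all $(\theta,I)\in\mathbb{R}^d\times D$. Let $(\theta(t),I(t))$ be a solution of $\dot\theta=\nabla N(I)+\nabla G(I)+\partial_I R(\theta,I)$, $\dot I=-\partial_\theta R(\theta,I)$ with $I(0)=I_0$, and set $\omega(I_0)=\nabla N(I_0)+\nabla G(I_0)$. Then for all $|t|\leq T^{1/3}$ the solution is defined, $|I(t)-I_0|\leq T^{-2/3}$, and $|\theta(t)-\theta(0)-t\,\omega(I_0)|\leq (2C_0+1)\,T^{-1/3}$. -/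

import Mathlib

open Real Metric Set

noncomputable section

/-- the gradient of a scalar function on `ℝ^d` -/
def grad (d : ℕ) (N : (Fin d → ℝ) → ℝ) : (Fin d → ℝ) → (Fin d → ℝ) :=
  fun I j => fderiv ℝ N I (Pi.single j 1)

lemma bootstrap_one_sided {E F : Type*} [NormedAddCommGroup E] [NormedSpace ℝ E]
    [NormedAddCommGroup F] [NormedSpace ℝ F]
    (b r c K : ℝ) (hr : 0 < r) (hc : 0 ≤ c) (hcb : c * b ≤ r)
    (I : ℝ → E) (I' : ℝ → E) (θ : ℝ → F) (θ' : ℝ → F) (ω : F)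
    (hderivI : ∀ t ∈ Icc 0 b, HasDerivWithinAt I (I' t) (Icc 0 b) t)
    (hderivθ : ∀ t ∈ Icc 0 b, HasDerivWithinAt θ (θ' t) (Icc 0 b) t)
    (hboundI : ∀ t ∈ Icc 0 b, ‖I t - I 0‖ ≤ r → ‖I' t‖ ≤ c)
    (hboundθ : ∀ t ∈ Icc 0 b, ‖I t - I 0‖ ≤ r → ‖θ' t - ω‖ ≤ K) :
    ∀ t ∈ Icc 0 b, ‖I t - I 0‖ ≤ c * t ∧ ‖θ t - θ 0 - t • ω‖ ≤ K * t := by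
  have hIcont : ContinuousOn I (Icc 0 b) := fun t ht => (hderivI t ht).continuousWithinAt
  have hsub : Icc (0:ℝ) b ⊆ {t | ‖I t - I 0‖ ≤ c * t} := by
    apply IsClosed.Icc_subset_of_forall_exists_gt
    · have hco : ContinuousOn (fun t => ‖I t - I 0‖ - c * t) (Icc 0 b) :=
        ((hIcont.sub continuousOn_const).norm).sub
          ((continuous_const.mul continuous_id).continuousOn)
      have heq : {t | ‖I t - I 0‖ ≤ c * t} ∩ Icc 0 b
          = Icc 0 b ∩ (fun t => ‖I t - I 0‖ - c * t) ⁻¹' Iic 0 := by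
        ext t
        simp only [Set.mem_inter_iff, Set.mem_setOf_eq, Set.mem_preimage, Set.mem_Iic,
          sub_nonpos, and_comm]
      rw [heq]
      exact hco.preimage_isClosed_of_isClosed isClosed_Icc isClosed_Iic
    · simp
    · rintro x ⟨hxs, hx0, hxb⟩ y hy
      have hcxr : c * x < r := by
        rcases hc.lt_or_eq with hc' | hc'
        · exact lt_of_lt_of_le (by nlinarith) hcb
        · rw [← hc']; simpa using hr
      have hxr : ‖I x - I 0‖ < r := lt_of_le_of_lt hxs hcxr
      have hcw := Metric.continuousWithinAt_iff.mp (hIcont x ⟨hx0, hxb.le⟩)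
      obtain ⟨δ, hδ, hδ'⟩ := hcw (r - ‖I x - I 0‖) (by linarith)
      set z := min y (min (x + δ/2) ((x+b)/2)) with hz
      have hxz : x < z := lt_min hy (lt_min (by linarith) (by linarith))
      have hzy : z ≤ y := min_le_left _ _
      have hzb : z ≤ b := by
        have : z ≤ (x+b)/2 := (min_le_right _ _).trans (min_le_right _ _)
        linarith
      have hzδ : z ≤ x + δ/2 := (min_le_right _ _).trans (min_le_left _ _)
      have hsubI : Icc x z ⊆ Icc 0 b := Icc_subset_Icc hx0 hzb
      have hkey : ∀ s ∈ Icc x z, ‖I s - I 0‖ ≤ r := by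
        intro s hs
        have hs' : s ∈ Icc 0 b := hsubI hs
        have hds : dist s x < δ := by
          rw [Real.dist_eq, abs_of_nonneg (by linarith [hs.1])]
          have := hs.2; linarith
        have h1 := hδ' hs' hds
        rw [dist_eq_norm] at h1
        have h2 : ‖I s - I 0‖ ≤ ‖I s - I x‖ + ‖I x - I 0‖ := by
          simpa [dist_eq_norm] using dist_triangle (I s) (I x) (I 0)
        linarith
      have hmvt := norm_image_sub_le_of_norm_deriv_le_segment'
        (f := I) (f' := I') (a := x) (b := z)
        (fun s hs => (hderivI s (hsubI hs)).mono hsubI)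
        (fun s hs => hboundI s (hsubI (Ico_subset_Icc_self hs))
          (hkey s (Ico_subset_Icc_self hs))) z (right_mem_Icc.mpr hxz.le)
      refine ⟨z, ?_, hxz, hzy⟩
      have h2 : ‖I z - I 0‖ ≤ ‖I z - I x‖ + ‖I x - I 0‖ := by
        simpa [dist_eq_norm] using dist_triangle (I z) (I x) (I 0)
      have : c * (z - x) + c * x = c * z := by ring
      simp only [Set.mem_setOf_eq]
      have hxs' : ‖I x - I 0‖ ≤ c * x := hxs
      linarith
  intro t ht
  have hIc : ∀ s ∈ Icc (0:ℝ) b, ‖I s - I 0‖ ≤ c * s := fun s hs => hsub hs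
  have hIr : ∀ s ∈ Icc (0:ℝ) b, ‖I s - I 0‖ ≤ r := by
    intro s hs
    exact (hIc s hs).trans ((mul_le_mul_of_nonneg_left hs.2 hc).trans hcb)
  refine ⟨hIc t ht, ?_⟩
  have hg : ∀ s ∈ Icc (0:ℝ) b,
      HasDerivWithinAt (fun u => θ u - u • ω) (θ' s - ω) (Icc 0 b) s := by
    intro s hs
    have h1 : HasDerivAt (fun u : ℝ => u • ω) ω s := by
      simpa using (hasDerivAt_id s).smul_const ω
    exact (hderivθ s hs).sub h1.hasDerivWithinAt
  have hmvt := norm_image_sub_le_of_norm_deriv_le_segment'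
    (f := fun u => θ u - u • ω) (f' := fun s => θ' s - ω) (a := 0) (b := b)
    hg (fun s hs => hboundθ s (Ico_subset_Icc_self hs) (hIr s (Ico_subset_Icc_self hs)))
    t ht
  simpa [sub_right_comm] using hmvt

lemma grad_lipschitz (d : ℕ) {C0 : ℝ} (hC0 : 0 ≤ C0) {D : Set (Fin d → ℝ)} (hD : IsOpen D)
    {N : (Fin d → ℝ) → ℝ} (hN : ContDiffOn ℝ 2 N D) {I0 : Fin d → ℝ} {r : ℝ}
    (hball : closedBall I0 r ⊆ D)
    (hhess : ∀ I ∈ closedBall I0 r, ∀ v : Fin d → ℝ, ‖fderiv ℝ (grad d N) I v‖ ≤ C0 * ‖v‖)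
    {I1 : Fin d → ℝ} (hI1 : I1 ∈ closedBall I0 r) :
    ‖grad d N I1 - grad d N I0‖ ≤ C0 * ‖I1 - I0‖ := by
  have hr0 : 0 ≤ r := dist_nonneg.trans (mem_closedBall.mp hI1)
  have hfd : DifferentiableOn ℝ (fderiv ℝ N) D :=
    (hN.fderiv_of_isOpen (m := 1) hD (by norm_num)).differentiableOn one_ne_zero
  have hgd : ∀ x ∈ closedBall I0 r, DifferentiableAt ℝ (grad d N) x := by
    intro x hx
    have h1 : DifferentiableAt ℝ (fderiv ℝ N) x :=
      hfd.differentiableAt (hD.mem_nhds (hball hx))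
    have : grad d N = fun y j => fderiv ℝ N y (Pi.single j 1) := rfl
    rw [this]
    exact differentiableAt_pi.mpr fun j => h1.clm_apply (differentiableAt_const _)
  have hbound : ∀ x ∈ closedBall I0 r, ‖fderiv ℝ (grad d N) x‖ ≤ C0 := fun x hx =>
    ContinuousLinearMap.opNorm_le_bound _ hC0 (hhess x hx)
  exact (convex_closedBall I0 r).norm_image_sub_le_of_norm_fderiv_le hgd hbound
    (mem_closedBall_self hr0) hI1

/-- **Effective stability for a nearly integrable normal form** (the final step in
the proof of the main theorem): let `T ≥ 1`, `C₀ ≥ 0`, let `N, G` be `C²` on an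
open set `D` with Hessians bounded by `C₀` on the closed ball
`B̄(I₀, T^{-2/3}) ⊆ D`, and let `R` be `C¹` with `|∂_I R| ≤ T⁻¹`, `|∂_θ R| ≤ T⁻¹`
on `ℝ^d × D`.  Every solution of `θ̇ = ∇N(I) + ∇G(I) + ∂_I R`, `İ = -∂_θ R` with
`I(0) = I₀` satisfies, for `|t| ≤ T^{1/3}`, `|I(t) - I₀| ≤ T^{-2/3}` and
`|θ(t) - θ(0) - t ω(I₀)| ≤ (2C₀+1) T^{-1/3}` where `ω(I₀) = ∇N(I₀) + ∇G(I₀)`. -/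
theorem effective_stability_normal_form
    (d : ℕ) (hd : 2 ≤ d) (T C0 : ℝ) (hT : 1 ≤ T) (hC0 : 0 ≤ C0)
    (D : Set (Fin d → ℝ)) (hD : IsOpen D)
    (I0 : Fin d → ℝ) (hball : closedBall I0 (T ^ (-(2:ℝ)/3)) ⊆ D)
    (N G : (Fin d → ℝ) → ℝ) (R : (Fin d → ℝ) × (Fin d → ℝ) → ℝ)
    (hN : ContDiffOn ℝ 2 N D) (hG : ContDiffOn ℝ 2 G D)
    (hR : ContDiffOn ℝ 1 R ((univ : Set (Fin d → ℝ)) ×ˢ D))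
    -- `|∇²N| ≤ C₀` and `|∇²G| ≤ C₀` on `B̄(I₀, T^{-2/3})`
    (hNhess : ∀ I ∈ closedBall I0 (T ^ (-(2:ℝ)/3)), ∀ v : Fin d → ℝ,
      ‖fderiv ℝ (grad d N) I v‖ ≤ C0 * ‖v‖)
    (hGhess : ∀ I ∈ closedBall I0 (T ^ (-(2:ℝ)/3)), ∀ v : Fin d → ℝ,
      ‖fderiv ℝ (grad d G) I v‖ ≤ C0 * ‖v‖)
    -- `|∂_I R| ≤ T⁻¹` and `|∂_θ R| ≤ T⁻¹` on `ℝ^d × D`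
    (hRI : ∀ p : (Fin d → ℝ) × (Fin d → ℝ), p.2 ∈ D →
      ‖fun j => fderiv ℝ R p ((0 : Fin d → ℝ), Pi.single j 1)‖ ≤ T⁻¹)
    (hRθ : ∀ p : (Fin d → ℝ) × (Fin d → ℝ), p.2 ∈ D →
      ‖fun j => fderiv ℝ R p (Pi.single j 1, (0 : Fin d → ℝ))‖ ≤ T⁻¹)
    -- `(θ, I)` solves the Hamiltonian equations on `|t| ≤ T^{1/3}`, `I(0) = I₀`
    (θ I : ℝ → Fin d → ℝ)
    (hsol : ∀ t ∈ Icc (-(T ^ ((1:ℝ)/3))) (T ^ ((1:ℝ)/3)),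
      HasDerivAt θ (fun j => grad d N (I t) j + grad d G (I t) j
        + fderiv ℝ R (θ t, I t) ((0 : Fin d → ℝ), Pi.single j 1)) t ∧
      HasDerivAt I (fun j => -fderiv ℝ R (θ t, I t) (Pi.single j 1, (0 : Fin d → ℝ))) t)
    (hI0 : I 0 = I0) :
    ∀ t ∈ Icc (-(T ^ ((1:ℝ)/3))) (T ^ ((1:ℝ)/3)),
      ‖I t - I0‖ ≤ T ^ (-(2:ℝ)/3) ∧
      ‖θ t - θ 0 - t • (fun j => grad d N I0 j + grad d G I0 j)‖
        ≤ (2 * C0 + 1) * T ^ (-(1:ℝ)/3) := by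
  have hT0 : (0:ℝ) < T := lt_of_lt_of_le one_pos hT
  set b := T ^ ((1:ℝ)/3) with hbdef
  set r := T ^ (-(2:ℝ)/3) with hrdef
  have hr : 0 < r := Real.rpow_pos_of_pos hT0 _
  have hb0 : 0 ≤ b := (Real.rpow_pos_of_pos hT0 _).le
  have hc : (0:ℝ) ≤ T⁻¹ := inv_nonneg.mpr hT0.le
  have hcb : T⁻¹ * b = r := by
    rw [hbdef, hrdef, ← Real.rpow_neg_one T, ← Real.rpow_add hT0]
    norm_num
  have hrb : r * b = T ^ (-(1:ℝ)/3) := by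
    rw [hbdef, hrdef, ← Real.rpow_add hT0]
    norm_num
  set ω : Fin d → ℝ := fun j => grad d N I0 j + grad d G I0 j with hω
  set K : ℝ := 2 * C0 * r + T⁻¹ with hK
  set I' : ℝ → Fin d → ℝ :=
    fun t => fun j => -fderiv ℝ R (θ t, I t) (Pi.single j 1, (0 : Fin d → ℝ)) with hI'
  set θ' : ℝ → Fin d → ℝ := fun t => fun j => grad d N (I t) j + grad d G (I t) j
    + fderiv ℝ R (θ t, I t) ((0 : Fin d → ℝ), Pi.single j 1) with hθ'
  have hmemD : ∀ u : ℝ, ‖I u - I0‖ ≤ r → I u ∈ D ∧ I u ∈ closedBall I0 r := by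
    intro u hu
    have hm : I u ∈ closedBall I0 r := by rw [mem_closedBall, dist_eq_norm]; exact hu
    exact ⟨hball hm, hm⟩
  have hboundI : ∀ u ∈ Icc (-b) b, ‖I u - I 0‖ ≤ r → ‖I' u‖ ≤ T⁻¹ := by
    intro u _ hIu
    rw [hI0] at hIu
    have hD' := (hmemD u hIu).1
    have hneg : I' u = -(fun j => fderiv ℝ R (θ u, I u) (Pi.single j 1, (0 : Fin d → ℝ))) := by
      funext j; simp [hI']
    rw [hneg, norm_neg]
    exact hRθ (θ u, I u) hD'
  have hboundθ : ∀ u ∈ Icc (-b) b, ‖I u - I 0‖ ≤ r → ‖θ' u - ω‖ ≤ K := by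
    intro u _ hIu
    rw [hI0] at hIu
    obtain ⟨hD', hBall⟩ := hmemD u hIu
    have heq : θ' u - ω = (grad d N (I u) - grad d N I0) + ((grad d G (I u) - grad d G I0)
        + fun j => fderiv ℝ R (θ u, I u) ((0 : Fin d → ℝ), Pi.single j 1)) := by
      funext j
      simp only [hθ', hω, Pi.sub_apply, Pi.add_apply]
      ring
    have h1 := grad_lipschitz d hC0 hD hN hball hNhess hBall
    have h2 := grad_lipschitz d hC0 hD hG hball hGhess hBall
    have h3 := hRI (θ u, I u) hD'
    have h4 : C0 * ‖I u - I0‖ ≤ C0 * r := mul_le_mul_of_nonneg_left hIu hC0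
    calc ‖θ' u - ω‖
        ≤ ‖grad d N (I u) - grad d N I0‖ + (‖grad d G (I u) - grad d G I0‖
          + ‖fun j => fderiv ℝ R (θ u, I u) ((0 : Fin d → ℝ), Pi.single j 1)‖) := by
          rw [heq]
          exact (norm_add_le _ _).trans (add_le_add le_rfl (norm_add_le _ _))
      _ ≤ K := by rw [hK]; linarith
  have hfwd := bootstrap_one_sided b r T⁻¹ K hr hc hcb.le I I' θ θ' ω
    (fun u hu => ((hsol u ⟨by linarith [hu.1], hu.2⟩).2).hasDerivWithinAt)
    (fun u hu => ((hsol u ⟨by linarith [hu.1], hu.2⟩).1).hasDerivWithinAt)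
    (fun u hu => hboundI u ⟨by linarith [hu.1], hu.2⟩)
    (fun u hu => hboundθ u ⟨by linarith [hu.1], hu.2⟩)
  have hmemneg : ∀ s ∈ Icc (0:ℝ) b, -s ∈ Icc (-b) b := by
    intro s hs; exact ⟨by linarith [hs.2], by linarith [hs.1]⟩
  have hbwd := bootstrap_one_sided b r T⁻¹ K hr hc hcb.le
    (fun s => I (-s)) (fun s => -(I' (-s))) (fun s => θ (-s)) (fun s => -(θ' (-s))) (-ω)
    (fun u hu => by
      have h := ((hsol (-u) (hmemneg u hu)).2).scomp u (hasDerivAt_neg u)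
      have h2 := h.hasDerivWithinAt (s := Icc 0 b); rw [neg_one_smul] at h2; exact h2)
    (fun u hu => by
      have h := ((hsol (-u) (hmemneg u hu)).1).scomp u (hasDerivAt_neg u)
      have h2 := h.hasDerivWithinAt (s := Icc 0 b); rw [neg_one_smul] at h2; exact h2)
    (fun u hu hn => by
      rw [norm_neg]
      exact hboundI (-u) (hmemneg u hu) (by simpa using hn))
    (fun u hu hn => by
      have : -θ' (-u) - -ω = -(θ' (-u) - ω) := by abel
      rw [this, norm_neg]
      exact hboundθ (-u) (hmemneg u hu) (by simpa using hn))
  have hKb : K * b ≤ (2 * C0 + 1) * T ^ (-(1:ℝ)/3) := by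
    have h1 : r ≤ T ^ (-(1:ℝ)/3) := by
      rw [hrdef]
      exact Real.rpow_le_rpow_of_exponent_le hT (by norm_num)
    have : K * b = 2 * C0 * (r * b) + T⁻¹ * b := by rw [hK]; ring
    rw [this, hrb, hcb]
    nlinarith
  have hK0 : 0 ≤ K := by rw [hK]; positivity
  intro t ht
  rcases le_or_gt 0 t with hpos | hneg
  · obtain ⟨hA, hB⟩ := hfwd t ⟨hpos, ht.2⟩
    rw [hI0] at hA
    constructor
    · exact hA.trans (by rw [← hcb]; exact mul_le_mul_of_nonneg_left ht.2 hc)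
    · exact hB.trans ((mul_le_mul_of_nonneg_left ht.2 hK0).trans hKb)
  · have hmt : -t ∈ Icc (0:ℝ) b := ⟨by linarith, by linarith [ht.1]⟩
    obtain ⟨hA, hB⟩ := hbwd (-t) hmt
    simp only [neg_neg, neg_zero] at hA hB
    rw [hI0] at hA
    constructor
    · refine hA.trans ?_
      rw [← hcb]
      exact mul_le_mul_of_nonneg_left (by linarith [ht.1]) hc
    · have heq : θ t - θ 0 - (-t) • (-ω) = θ t - θ 0 - t • ω := by
        rw [neg_smul, smul_neg, neg_neg]
      rw [heq] at hB
      exact hB.trans ((mul_le_mul_of_nonneg_left (by linarith [ht.1] : -t ≤ b) hK0).trans hKb)
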